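/- arXiv:0911.5078 — 4 statements merged into one kernel-verified Lean document; each statement's English description precedes it below -/
import Mathlib

section
/- Let L be a 2×2 matrix with rational entries and determinant 1, let r and s be non-zero integers, and let u and v be integer vectors in ℤ² each with coprime entries. If L·(r·u) = s·v, then d(L) ≥ |s/r| ≥ 1/d(L), where d(L) is the least positive integer d such that d·L has all integer entries. -/
/-- `d` is the denominator of `L ∈ SL₂(ℚ)`: the least integer `d ≥ 1` such that
all entries of `d • L` are integers. -/
def IsDenom (L : Matrix (Fin 2) (Fin 2) ℚ) (d : ℕ) : Prop :=
  1 ≤ d ∧ (∀ i j, ∃ z : ℤ, (d : ℚ) * L i j = (z : ℚ)) ∧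
    ∀ d' : ℕ, 1 ≤ d' → (∀ i j, ∃ z : ℤ, (d' : ℚ) * L i j = (z : ℚ)) → d ≤ d'

theorem stmt0 (L : Matrix (Fin 2) (Fin 2) ℚ) (hL : L.det = 1)
    (d : ℕ) (hd : IsDenom L d)
    (r s : ℤ) (hr : r ≠ 0) (hs : s ≠ 0)
    (u v : Fin 2 → ℤ) (hu : IsCoprime (u 0) (u 1)) (hv : IsCoprime (v 0) (v 1))
    (h : L.mulVec ((r : ℚ) • fun i => (u i : ℚ)) = (s : ℚ) • fun i => (v i : ℚ)) :
    (1 : ℚ) / (d : ℚ) ≤ |(s : ℚ) / (r : ℚ)| ∧ |(s : ℚ) / (r : ℚ)| ≤ (d : ℚ) := by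
  obtain ⟨hd1, hdint, -⟩ := hd
  obtain ⟨a, ha⟩ := hdint 0 0
  obtain ⟨b, hb⟩ := hdint 0 1
  obtain ⟨c, hc⟩ := hdint 1 0
  obtain ⟨e, he⟩ := hdint 1 1
  have hdz : (d : ℤ) ≠ 0 := by exact_mod_cast Nat.one_le_iff_ne_zero.mp hd1
  rw [Matrix.det_fin_two] at hL
  have hdet : a * e - b * c = (d : ℤ) ^ 2 := by
    have h2 : (a : ℚ) * e - b * c = (d : ℚ) ^ 2 := by
      rw [← ha, ← hb, ← hc, ← he]
      linear_combination (d : ℚ) ^ 2 * hL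
    exact_mod_cast h2
  have h0 := congrFun h 0
  have h1 := congrFun h 1
  simp only [Matrix.mulVec, dotProduct, Fin.sum_univ_two, Pi.smul_apply,
    smul_eq_mul] at h0 h1
  have hw0 : r * (a * u 0 + b * u 1) = (d : ℤ) * s * v 0 := by
    have : (r : ℚ) * ((a : ℚ) * u 0 + (b : ℚ) * u 1) = (d : ℚ) * s * v 0 := by
      rw [← ha, ← hb]; linear_combination (d : ℚ) * h0
    exact_mod_cast this
  have hw1 : r * (c * u 0 + e * u 1) = (d : ℤ) * s * v 1 := by
    have : (r : ℚ) * ((c : ℚ) * u 0 + (e : ℚ) * u 1) = (d : ℚ) * s * v 1 := by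
      rw [← hc, ← he]; linear_combination (d : ℚ) * h1
    exact_mod_cast this
  have hz0 : s * (e * v 0 - b * v 1) = (d : ℤ) * r * u 0 := by
    apply mul_left_cancel₀ hdz
    linear_combination -e * hw0 + b * hw1 + r * (u 0) * hdet
  have hz1 : s * (-(c * v 0) + a * v 1) = (d : ℤ) * r * u 1 := by
    apply mul_left_cancel₀ hdz
    linear_combination c * hw0 - a * hw1 + r * (u 1) * hdet
  have hvg : Int.gcd (v 0) (v 1) = 1 := Int.isCoprime_iff_gcd_eq_one.mp hv
  have hug : Int.gcd (u 0) (u 1) = 1 := Int.isCoprime_iff_gcd_eq_one.mp hu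
  set w0 := a * u 0 + b * u 1 with hw0def
  set w1 := c * u 0 + e * u 1 with hw1def
  set z0 := e * v 0 - b * v 1 with hz0def
  set z1 := -(c * v 0) + a * v 1 with hz1def
  have hkey1 : r.natAbs * Int.gcd w0 w1 = d * s.natAbs := by
    calc r.natAbs * Int.gcd w0 w1 = Int.gcd (r * w0) (r * w1) := (Int.gcd_mul_left r w0 w1).symm
      _ = Int.gcd ((d : ℤ) * s * v 0) ((d : ℤ) * s * v 1) := by rw [hw0, hw1]
      _ = ((d : ℤ) * s).natAbs * Int.gcd (v 0) (v 1) := Int.gcd_mul_left _ _ _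
      _ = d * s.natAbs := by rw [hvg]; simp [Int.natAbs_mul]
  have hkey2 : s.natAbs * Int.gcd z0 z1 = d * r.natAbs := by
    calc s.natAbs * Int.gcd z0 z1 = Int.gcd (s * z0) (s * z1) := (Int.gcd_mul_left s z0 z1).symm
      _ = Int.gcd ((d : ℤ) * r * u 0) ((d : ℤ) * r * u 1) := by rw [hz0, hz1]
      _ = ((d : ℤ) * r).natAbs * Int.gcd (u 0) (u 1) := Int.gcd_mul_left _ _ _
      _ = d * r.natAbs := by rw [hug]; simp [Int.natAbs_mul]
  have hg1 : 1 ≤ Int.gcd w0 w1 := by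
    rcases Nat.eq_zero_or_pos (Int.gcd w0 w1) with h' | h'
    · exfalso
      obtain ⟨e0, e1⟩ := Int.gcd_eq_zero_iff.mp h'
      rw [e0] at hw0; rw [e1] at hw1
      have hv0 : v 0 = 0 := by
        have := hw0.symm
        rcases mul_eq_zero.mp (by linarith [hw0] : (d : ℤ) * s * v 0 = 0) with h'' | h''
        · exact absurd h'' (mul_ne_zero hdz hs)
        · exact h''
      have hv1 : v 1 = 0 := by
        rcases mul_eq_zero.mp (by linarith [hw1] : (d : ℤ) * s * v 1 = 0) with h'' | h''
        · exact absurd h'' (mul_ne_zero hdz hs)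
        · exact h''
      rw [hv0, hv1] at hvg
      simp at hvg
    · exact h'
  have hg2 : 1 ≤ Int.gcd z0 z1 := by
    rcases Nat.eq_zero_or_pos (Int.gcd z0 z1) with h' | h'
    · exfalso
      obtain ⟨e0, e1⟩ := Int.gcd_eq_zero_iff.mp h'
      rw [e0] at hz0; rw [e1] at hz1
      have hu0 : u 0 = 0 := by
        rcases mul_eq_zero.mp (by linarith [hz0] : (d : ℤ) * r * u 0 = 0) with h'' | h''
        · exact absurd h'' (mul_ne_zero hdz hr)
        · exact h''
      have hu1 : u 1 = 0 := by
        rcases mul_eq_zero.mp (by linarith [hz1] : (d : ℤ) * r * u 1 = 0) with h'' | h''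
        · exact absurd h'' (mul_ne_zero hdz hr)
        · exact h''
      rw [hu0, hu1] at hug
      simp at hug
    · exact h'
  -- pass to ℚ
  have habs : |(s : ℚ) / (r : ℚ)| = (s.natAbs : ℚ) / (r.natAbs : ℚ) := by
    rw [abs_div]
    congr 1 <;> simp [Nat.cast_natAbs]
  have hrA : (0 : ℚ) < (r.natAbs : ℚ) := by
    exact_mod_cast Nat.pos_of_ne_zero (Int.natAbs_ne_zero.mpr hr)
  have hdQ : (0 : ℚ) < (d : ℚ) := by exact_mod_cast hd1
  have hk1Q : (r.natAbs : ℚ) * (Int.gcd w0 w1 : ℚ) = (d : ℚ) * (s.natAbs : ℚ) := by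
    exact_mod_cast hkey1
  have hk2Q : (s.natAbs : ℚ) * (Int.gcd z0 z1 : ℚ) = (d : ℚ) * (r.natAbs : ℚ) := by
    exact_mod_cast hkey2
  have hg1Q : (1 : ℚ) ≤ (Int.gcd w0 w1 : ℚ) := by exact_mod_cast hg1
  have hg2Q : (1 : ℚ) ≤ (Int.gcd z0 z1 : ℚ) := by exact_mod_cast hg2
  rw [habs]
  constructor
  · rw [div_le_div_iff₀ hdQ hrA]
    nlinarith [hk1Q, hg1Q, hrA]
  · rw [div_le_iff₀ hrA]
    nlinarith [hk2Q, hg2Q, hrA, (by positivity : (0:ℚ) ≤ (s.natAbs : ℚ))]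
end

section
/- Let L be a 2×2 matrix with rational entries and determinant 1, and let d(L) be its denominator. If |trace(L)| < 2/d(L) or |trace(L)| > 2·d(L), then L has no rational eigenslopes; that is, there is no nonzero vector (v₀, v₁) with v₀, v₁ ∈ ℚ (not both zero) that is an eigenvector of L. -/
/-- If `|trace L| < 2/d(L)` or `|trace L| > 2·d(L)`, then `L` has no rational
eigenslope, i.e. no nonzero rational eigenvector. -/
theorem stmt1 (L : Matrix (Fin 2) (Fin 2) ℚ) (hL : L.det = 1)
    (d : ℕ) (hd : IsDenom L d)
    (h : |L.trace| < 2 / (d : ℚ) ∨ |L.trace| > 2 * (d : ℚ)) :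
    ¬ ∃ (v : Fin 2 → ℚ) (q : ℚ), v ≠ 0 ∧ L.mulVec v = q • v := by
  rintro ⟨v, q, hv, heq⟩
  have h0 := congrFun heq 0
  have h1 := congrFun heq 1
  simp [Matrix.mulVec, dotProduct, Fin.sum_univ_two] at h0 h1
  rw [Matrix.det_fin_two] at hL
  have htr : L.trace = L 0 0 + L 1 1 := Matrix.trace_fin_two L
  -- characteristic polynomial relation
  have hvne : v 0 ≠ 0 ∨ v 1 ≠ 0 := by
    by_contra hc
    push_neg at hc
    apply hv
    funext i
    fin_cases i <;> simp [hc.1, hc.2]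
  have hDx : ((q - L 0 0) * (q - L 1 1) - L 0 1 * L 1 0) * v 0 = 0 := by
    linear_combination (L 1 1 - q) * h0 - L 0 1 * h1
  have hDy : ((q - L 0 0) * (q - L 1 1) - L 0 1 * L 1 0) * v 1 = 0 := by
    linear_combination (L 0 0 - q) * h1 - L 1 0 * h0
  have hD : (q - L 0 0) * (q - L 1 1) - L 0 1 * L 1 0 = 0 := by
    rcases hvne with hx | hy
    · exact (mul_eq_zero.1 hDx).resolve_right hx
    · exact (mul_eq_zero.1 hDy).resolve_right hy
  have hchar : q ^ 2 - L.trace * q + 1 = 0 := by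
    rw [htr]; linear_combination hD - hL
  -- integrality
  obtain ⟨hd1, hdint, -⟩ := hd
  obtain ⟨z0, hz0⟩ := hdint 0 0
  obtain ⟨z3, hz3⟩ := hdint 1 1
  set T : ℤ := z0 + z3 with hTdef
  have hT : (d : ℚ) * L.trace = (T : ℚ) := by
    rw [htr, hTdef]; push_cast; linear_combination hz0 + hz3
  set s : ℚ := (d : ℚ) * q with hsdef
  have hs : s ^ 2 - (T : ℚ) * s + (d : ℚ) ^ 2 = 0 := by
    rw [hsdef]; linear_combination (d : ℚ) ^ 2 * hchar + (d : ℚ) * q * hT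
  have hdQ : (0 : ℚ) < (d : ℚ) := by exact_mod_cast hd1
  -- s is an integer
  have hden : s.den = 1 := by
    have hdne : ((s.den : ℚ)) ≠ 0 := by exact_mod_cast s.den_ne_zero
    have key : (s.num : ℚ) ^ 2 - (T : ℚ) * s.num * s.den + (d : ℚ) ^ 2 * (s.den : ℚ) ^ 2 = 0 := by
      have hnd : (s.num : ℚ) = s * s.den := (Rat.mul_den_eq_num s).symm
      rw [hnd]; linear_combination (s.den : ℚ) ^ 2 * hs
    have keyZ : s.num ^ 2 - T * s.num * (s.den : ℤ) + (d : ℤ) ^ 2 * (s.den : ℤ) ^ 2 = 0 := by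
      exact_mod_cast key
    have hdvd : (s.den : ℤ) ∣ s.num ^ 2 := ⟨T * s.num - (d : ℤ) ^ 2 * s.den, by linarith [keyZ]⟩
    have hdvdN : s.den ∣ s.num.natAbs ^ 2 := by
      have := Int.natAbs_dvd_natAbs.2 hdvd
      simpa [Int.natAbs_pow] using this
    exact Nat.Coprime.eq_one_of_dvd ((s.reduced.symm).pow_right 2) hdvdN
  have hsA : s = (s.num : ℚ) := by
    conv_lhs => rw [← Rat.num_div_den s]
    rw [hden]; simp
  set A : ℤ := s.num with hAdef
  set B : ℤ := T - A with hBdef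
  have hAB : A * B = (d : ℤ) ^ 2 := by
    have hB' : (B : ℚ) = (T : ℚ) - (A : ℚ) := by rw [hBdef]; push_cast; ring
    have : (A : ℚ) * (B : ℚ) = ((d : ℤ) : ℚ) ^ 2 := by
      rw [hB', ← hsA]
      push_cast
      linear_combination -hs
    exact_mod_cast this
  have hdZ : (1 : ℤ) ≤ (d : ℤ) := by exact_mod_cast hd1
  -- bounds on |T| = |A + B|
  have hABpos : 0 < A * B := by rw [hAB]; positivity
  have hTabs : T = A + B := by ring
  have hlow : 2 * (d : ℤ) ≤ |T| := by
    rcases (pos_and_pos_or_neg_and_neg_of_mul_pos hABpos) with ⟨hA, hB⟩ | ⟨hA, hB⟩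
    · rw [hTabs, abs_of_pos (by linarith)]
      nlinarith [sq_nonneg (A - B)]
    · rw [hTabs, abs_of_neg (by linarith)]
      nlinarith [sq_nonneg (A - B)]
  have hhigh : |T| ≤ 2 * (d : ℤ) ^ 2 := by
    rcases (pos_and_pos_or_neg_and_neg_of_mul_pos hABpos) with ⟨hA, hB⟩ | ⟨hA, hB⟩
    · rw [hTabs, abs_of_pos (by linarith)]
      nlinarith [mul_pos hA hB]
    · rw [hTabs, abs_of_neg (by linarith)]
      nlinarith [mul_pos (neg_pos.2 hA) (neg_pos.2 hB)]
  -- contradiction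
  have hTQ : |(T : ℚ)| = (d : ℚ) * |L.trace| := by
    rw [← hT, abs_mul, abs_of_pos hdQ]
  have hlowQ : 2 * (d : ℚ) ≤ |(T : ℚ)| := by exact_mod_cast hlow
  have hhighQ : |(T : ℚ)| ≤ 2 * (d : ℚ) ^ 2 := by exact_mod_cast hhigh
  have hd1Q : (1 : ℚ) ≤ (d : ℚ) := by exact_mod_cast hd1
  rcases h with hlt | hgt
  · rw [hTQ] at hlowQ
    have h2 : |L.trace| * (d : ℚ) < 2 := (lt_div_iff₀ hdQ).1 hlt
    nlinarith [abs_nonneg L.trace]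
  · rw [hTQ] at hhighQ
    have h2 : (d : ℚ) * (2 * (d : ℚ)) < (d : ℚ) * |L.trace| :=
      mul_lt_mul_of_pos_left hgt hdQ
    have h3 : (d : ℚ) * (2 * (d : ℚ)) = 2 * (d : ℚ) ^ 2 := by ring
    rw [h3] at h2
    exact absurd hhighQ (not_le.2 h2)
end

section
/- Let L ∈ SL₂(ℚ) have a rational eigenslope. Then the corresponding eigenvalue q is rational and satisfies 1/d(L) ≤ |q| ≤ d(L), where d(L) is the denominator of L. -/
/-- If `L ∈ SL₂(ℚ)` has a rational eigenslope, with eigenvector `(r, s)` for coprime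
integers `r, s` and (rational) eigenvalue `q`, then `1/d(L) ≤ |q| ≤ d(L)`. -/
theorem stmt2 (L : Matrix (Fin 2) (Fin 2) ℚ) (hL : L.det = 1)
    (d : ℕ) (hd : IsDenom L d)
    (r s : ℤ) (hco : IsCoprime r s) (q : ℚ)
    (h : L.mulVec ![(r : ℚ), (s : ℚ)] = q • ![(r : ℚ), (s : ℚ)]) :
    (1 : ℚ) / (d : ℚ) ≤ |q| ∧ |q| ≤ (d : ℚ) := by
  obtain ⟨hd1, hint, -⟩ := hd
  obtain ⟨A, hA⟩ := hint 0 0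
  obtain ⟨B, hB⟩ := hint 0 1
  obtain ⟨C, hC⟩ := hint 1 0
  obtain ⟨E, hE⟩ := hint 1 1
  have h0 := congrFun h 0
  have h1 := congrFun h 1
  simp [Matrix.mulVec, dotProduct, Fin.sum_univ_two] at h0 h1
  obtain ⟨x, y, hxy⟩ := hco
  rw [Matrix.det_fin_two] at hL
  set k : ℤ := x*(A*r+B*s) + y*(C*r+E*s) with hk
  have e0 : (A:ℚ)*r + B*s = (d:ℚ)*q*r := by
    linear_combination (d:ℚ) * h0 - (r:ℚ) * hA - (s:ℚ) * hB
  have e1 : (C:ℚ)*r + E*s = (d:ℚ)*q*s := by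
    linear_combination (d:ℚ) * h1 - (r:ℚ) * hC - (s:ℚ) * hE
  have hxyQ : (x:ℚ)*r + y*s = 1 := by exact_mod_cast hxy
  have hkq : (k:ℚ) = (d:ℚ)*q := by
    push_cast [hk]
    linear_combination (x:ℚ) * e0 + (y:ℚ) * e1 + (d:ℚ)*q*hxyQ
  have h0z : A*r + B*s = k*r := by
    have : ((A*r+B*s : ℤ):ℚ) = ((k*r : ℤ):ℚ) := by
      push_cast; linear_combination e0 - (r:ℚ) * hkq
    exact_mod_cast this
  have h1z : C*r + E*s = k*s := by
    have : ((C*r+E*s : ℤ):ℚ) = ((k*s : ℤ):ℚ) := by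
      push_cast; linear_combination e1 - (s:ℚ) * hkq
    exact_mod_cast this
  have hdet : A*E - B*C = (d:ℤ)^2 := by
    have : ((A*E - B*C : ℤ):ℚ) = (((d:ℤ)^2 : ℤ):ℚ) := by
      push_cast
      linear_combination (d:ℚ)^2*hL - (d:ℚ)*(L 1 1)*hA - (A:ℚ)*hE +
        (B:ℚ)*hC + (d:ℚ)*(L 1 0)*hB
    exact_mod_cast this
  have hMr : ((k-A)*(k-E) - B*C)*r = 0 := by
    linear_combination (E - k) * h0z - B * h1z
  have hMs : ((k-A)*(k-E) - B*C)*s = 0 := by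
    linear_combination (A - k) * h1z - C * h0z
  have hM0 : (k-A)*(k-E) - B*C = 0 := by
    linear_combination x*hMr + y*hMs - ((k-A)*(k-E)-B*C)*hxy
  have hkey : k*(A+E-k) = (d:ℤ)^2 := by linear_combination hdet - hM0
  have hdpos : 0 < (d:ℤ) := by exact_mod_cast hd1
  have hd2 : (0:ℤ) < (d:ℤ)^2 := by positivity
  have hk0 : k ≠ 0 := by
    intro h'; rw [h', zero_mul] at hkey; omega
  have ht0 : A+E-k ≠ 0 := by
    rintro h'; rw [h', mul_zero] at hkey; omega
  have habs : |k| * |A+E-k| = (d:ℤ)^2 := by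
    rw [← abs_mul, hkey, abs_of_pos hd2]
  have hk1 : 1 ≤ |k| := Int.one_le_abs (by exact hk0)
  have hk2 : |k| ≤ (d:ℤ)^2 := by
    nlinarith [Int.one_le_abs ht0, abs_nonneg k]
  have hdQ : (0:ℚ) < (d:ℚ) := by exact_mod_cast hd1
  have habsq : |(k:ℚ)| = (d:ℚ) * |q| := by
    rw [hkq, abs_mul, abs_of_pos hdQ]
  have hk1Q : (1:ℚ) ≤ |(k:ℚ)| := by
    rw [← Int.cast_abs]; exact_mod_cast hk1
  have hk2Q : |(k:ℚ)| ≤ (d:ℚ)^2 := by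
    rw [← Int.cast_abs]; exact_mod_cast hk2
  constructor
  · rw [div_le_iff₀ hdQ]
    linarith [habsq ▸ hk1Q]
  · have : (d:ℚ) * |q| ≤ (d:ℚ)^2 := habsq ▸ hk2Q
    nlinarith
end

section
/- Let J ∈ SL₂(ℤ) be hyperbolic (|trace(J)| > 2) and K ∈ SL₂(ℚ). Then there exists N such that for all n ≥ N, the matrix Jⁿ K has no eigenvector with rational entries. -/
open Matrix

/-- From a rational eigenvector, the eigenvalue satisfies the characteristic equation. -/
lemma aux_eig (M : Matrix (Fin 2) (Fin 2) ℚ) (hdet : M.det = 1)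
    (v : Fin 2 → ℚ) (q : ℚ) (hv : v ≠ 0) (h : M.mulVec v = q • v) :
    q ^ 2 - M.trace * q + 1 = 0 := by
  have h0 : (M - q • 1).mulVec v = 0 := by
    rw [Matrix.sub_mulVec, Matrix.smul_mulVec, Matrix.one_mulVec, h, sub_self]
  have hd : (M - q • 1).det = 0 :=
    (Matrix.exists_mulVec_eq_zero_iff).mp ⟨v, hv, h0⟩
  rw [Matrix.det_fin_two] at hd hdet
  rw [Matrix.trace_fin_two]
  simp only [Matrix.sub_apply, Matrix.smul_apply, Matrix.one_apply_eq, smul_eq_mul,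
    mul_one, Matrix.one_apply_ne (by decide : (0:Fin 2) ≠ 1),
    Matrix.one_apply_ne (by decide : (1:Fin 2) ≠ 0), mul_zero, sub_zero] at hd
  linear_combination hd - hdet

/-- Cayley–Hamilton for 2×2 with det 1. -/
lemma aux_ch (M : Matrix (Fin 2) (Fin 2) ℚ) (hdet : M.det = 1) :
    M * M = M.trace • M - 1 := by
  rw [Matrix.det_fin_two] at hdet
  ext i j
  fin_cases i <;> fin_cases j <;>
    simp [Matrix.mul_apply, Fin.sum_univ_two, Matrix.trace_fin_two, Matrix.sub_apply,
      Matrix.smul_apply, Matrix.one_apply, smul_eq_mul] <;>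
    first
      | linear_combination -hdet
      | ring

lemma aux_seq (c : ℕ → ℤ) (t : ℤ) (ht : 3 ≤ |t|)
    (hrec : ∀ n, c (n + 2) = t * c (n + 1) - c n) (B : ℤ) :
    (∀ n, c n = 0) ∨ ∃ N : ℕ, ∀ n ≥ N, B < |c n| := by
  by_cases htrig : ∃ n, c (n + 1) ≠ 0 ∧ |c n| ≤ |c (n + 1)|
  · right
    obtain ⟨n, hne, hle⟩ := htrig
    have grow : ∀ k, c (n + k + 1) ≠ 0 ∧ |c (n + k)| ≤ |c (n + k + 1)| ∧
        2 ^ k ≤ |c (n + k + 1)| := by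
      intro k
      induction k with
      | zero =>
        refine ⟨hne, hle, ?_⟩
        simpa using Int.one_le_abs (by simpa using hne)
      | succ k ih =>
        obtain ⟨h1, h2, h3⟩ := ih
        have e : c (n + k + 2) = t * c (n + k + 1) - c (n + k) := hrec (n + k)
        have habs : |t| * |c (n + k + 1)| - |c (n + k)| ≤ |c (n + k + 2)| := by
          rw [e, ← abs_mul]
          have := abs_sub_abs_le_abs_sub (t * c (n + k + 1)) (c (n + k))
          linarith
        have h3a : 3 * |c (n + k + 1)| ≤ |t| * |c (n + k + 1)| :=
          mul_le_mul_of_nonneg_right ht (abs_nonneg _)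
        have h1pow : (1:ℤ) ≤ 2 ^ k := by exact_mod_cast Nat.one_le_two_pow
        have hpos : 1 ≤ |c (n + k + 1)| := le_trans h1pow h3
        have key : 2 * |c (n + k + 1)| ≤ |c (n + k + 2)| := by linarith
        have hk2 : (2:ℤ) ^ (k + 1) ≤ |c (n + k + 2)| := by
          rw [pow_succ]
          linarith
        have hnz : c (n + k + 2) ≠ 0 := by
          intro h0
          rw [h0, abs_zero] at hk2
          have : (0:ℤ) < 2 ^ (k+1) := by positivity
          linarith
        have hmono : |c (n + k + 1)| ≤ |c (n + k + 2)| := by linarith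
        refine ⟨?_, ?_, ?_⟩
        · simpa [show n + (k+1) + 1 = n + k + 2 by ring] using hnz
        · simpa [show n + (k+1) = n + k + 1 by ring,
            show n + (k+1) + 1 = n + k + 2 by ring] using hmono
        · simpa [show n + (k+1) + 1 = n + k + 2 by ring] using hk2
    refine ⟨n + B.toNat + 1, fun m hm => ?_⟩
    obtain ⟨j, rfl⟩ : ∃ j, m = n + j + 1 := ⟨m - n - 1, by omega⟩
    have hj : B.toNat ≤ j := by omega
    have h1 : (2:ℤ) ^ j ≤ |c (n + j + 1)| := (grow j).2.2
    have h2 : (2:ℤ) ^ B.toNat ≤ 2 ^ j := pow_le_pow_right₀ one_le_two hj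
    have h3 : B < 2 ^ B.toNat := by
      calc B ≤ (B.toNat : ℤ) := Int.self_le_toNat B
        _ < 2 ^ B.toNat := by exact_mod_cast (Nat.lt_two_pow_self (n := B.toNat))
    linarith
  · left
    push_neg at htrig
    have step0 : ∀ n, c (n + 1) = 0 → c n = 0 := by
      intro n h0
      by_contra hn
      have e : c (n + 2) = -c n := by rw [hrec n, h0]; ring
      have h1 := htrig (n + 1) (by rw [show n + 1 + 1 = n + 2 by ring, e]; simpa using hn)
      rw [h0, show n + 1 + 1 = n + 2 by ring, e, abs_zero, abs_neg] at h1
      exact absurd h1 (not_lt.mpr (abs_nonneg _))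
    have main : ∀ m : ℕ, ∀ n, |c n| ≤ (m : ℤ) → c n = 0 := by
      intro m
      induction m with
      | zero =>
        intro n h
        have : |c n| ≤ 0 := by simpa using h
        exact abs_eq_zero.mp (le_antisymm this (abs_nonneg _))
      | succ m ih =>
        intro n h
        by_contra hn
        have hne1 : c (n + 1) ≠ 0 := fun h0 => hn (step0 n h0)
        have hlt : |c (n + 1)| < |c n| := htrig n hne1
        have : |c (n + 1)| ≤ (m : ℤ) := by push_cast at h ⊢; omega
        exact hne1 (ih (n + 1) this)
    intro n
    exact main (|c n|).toNat n (by simp [Int.toNat_of_nonneg (abs_nonneg _)])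

lemma aux_clear (D : ℤ) (q : ℚ) (hdvd : (q.den : ℤ) ∣ D) : ∃ m : ℤ, (D : ℚ) * q = m := by
  obtain ⟨k, hk⟩ := hdvd
  refine ⟨k * q.num, ?_⟩
  rw [hk]
  push_cast
  rw [show ((q.den : ℚ)) * (k : ℚ) * q = (k : ℚ) * (q * (q.den : ℚ)) by ring]
  rw [show q * (q.den : ℚ) = (q.num : ℚ) by exact_mod_cast Rat.mul_den_eq_num q]

lemma aux_bound (D : ℤ) (hD : 1 ≤ D) (c : ℤ) (q : ℚ)
    (h : q ^ 2 - ((c : ℚ) / (D : ℚ)) * q + 1 = 0) : |c| ≤ 2 * D ^ 2 := by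
  have hDQ : ((D : ℚ)) ≠ 0 := by positivity
  have hq : q ≠ 0 := by rintro rfl; simp at h
  set a : ℤ := q.num with ha
  set b : ℤ := (q.den : ℤ) with hb
  have hb0 : 0 < b := by rw [hb]; exact_mod_cast q.pos
  have hb1 : 1 ≤ b := hb0
  have ha0 : a ≠ 0 := Rat.num_ne_zero.mpr hq
  have hbq : (b : ℚ) * q = a := by
    rw [hb, ha]
    push_cast
    rw [mul_comm]
    exact_mod_cast Rat.mul_den_eq_num q
  have key : c * a * b = D * (a ^ 2 + b ^ 2) := by
    have hQ : (c : ℚ) * a * b = (D : ℚ) * ((a : ℚ) ^ 2 + (b : ℚ) ^ 2) := by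
      field_simp at h
      -- h : q ^ 2 * D - c * q + D = 0
      linear_combination (-(b : ℚ) ^ 2) * h +
        ((D : ℚ) * ((a : ℚ) + (b : ℚ) * q) - (c : ℚ) * (b : ℚ)) * hbq
    exact_mod_cast hQ
  have hco : IsCoprime a b := by
    rw [Int.isCoprime_iff_gcd_eq_one]
    simpa [Int.gcd, ha, hb] using q.reduced
  have haD : a ∣ D := by
    have h1 : a ∣ D * b ^ 2 := ⟨c * b - D * a, by linarith [key]⟩
    exact (hco.pow_right).dvd_of_dvd_mul_right h1
  have hbD : b ∣ D := by
    have h1 : b ∣ D * a ^ 2 := ⟨c * a - D * b, by linarith [key]⟩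
    exact (hco.symm.pow_right).dvd_of_dvd_mul_right h1
  have hD0 : (0:ℤ) < D := hD
  have hxD : |a| ≤ D := Int.le_of_dvd hD0 ((abs_dvd _ _).mpr haD)
  have hyD : b ≤ D := Int.le_of_dvd hD0 hbD
  have hx1 : 1 ≤ |a| := Int.one_le_abs ha0
  have habs : |c| * (|a| * b) = D * (|a| ^ 2 + b ^ 2) := by
    have h1 : |c * a * b| = |c| * (|a| * b) := by
      rw [abs_mul, abs_mul, abs_of_pos hb0, mul_assoc]
    have h2 : |D * (a ^ 2 + b ^ 2)| = D * (|a| ^ 2 + b ^ 2) := by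
      rw [abs_of_nonneg (by positivity), sq_abs]
    rw [key] at h1
    rw [h2] at h1
    exact h1.symm
  have t1 : |a| * |a| ≤ D * |a| := mul_le_mul_of_nonneg_right hxD (abs_nonneg _)
  have t2 : b * b ≤ D * b := mul_le_mul_of_nonneg_right hyD (by linarith)
  have t3 : |a| + b ≤ 2 * (|a| * b) := by
    nlinarith [mul_nonneg (by linarith : (0:ℤ) ≤ |a| - 1) (by linarith : (0:ℤ) ≤ b - 1)]
  have u1 : D * (|a| * |a|) ≤ D * (D * |a|) := mul_le_mul_of_nonneg_left t1 (by linarith)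
  have u2 : D * (b * b) ≤ D * (D * b) := mul_le_mul_of_nonneg_left t2 (by linarith)
  have u3 : D ^ 2 * (|a| + b) ≤ D ^ 2 * (2 * (|a| * b)) :=
    mul_le_mul_of_nonneg_left t3 (by positivity)
  have h5 : D * (|a| ^ 2 + b ^ 2) ≤ 2 * D ^ 2 * (|a| * b) := by
    ring_nf at u1 u2 u3 ⊢
    linarith
  have h6 : |c| * (|a| * b) ≤ 2 * D ^ 2 * (|a| * b) := by linarith
  have hxy : 0 < |a| * b := by positivity
  exact le_of_mul_le_mul_right h6 hxy

/-- Let `J ∈ SL₂(ℤ)` be hyperbolic (`|trace J| > 2`) and `K ∈ SL₂(ℚ)`. Then there is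
an `N` such that for all `n ≥ N` the matrix `Jⁿ K` has no eigenvector with rational
entries. -/
theorem stmt6 (J : Matrix (Fin 2) (Fin 2) ℤ) (hJdet : J.det = 1) (hJtr : 2 < |J.trace|)
    (K : Matrix (Fin 2) (Fin 2) ℚ) (hKdet : K.det = 1) :
    ∃ N : ℕ, ∀ n ≥ N,
      ¬ ∃ (v : Fin 2 → ℚ) (q : ℚ), v ≠ 0 ∧
        ((J.map (Int.cast : ℤ → ℚ)) ^ n * K).mulVec v = q • v := by
  set Jc := J.map (Int.cast : ℤ → ℚ) with hJc
  have hmap : ∀ n : ℕ, Jc ^ n = (J ^ n).map (Int.cast : ℤ → ℚ) := by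
    intro n
    have h := map_pow ((Int.castRingHom ℚ).mapMatrix) J n
    simpa [RingHom.mapMatrix_apply, hJc] using h.symm
  have hdetJc : Jc.det = 1 := by
    have h := RingHom.map_det (Int.castRingHom ℚ) J
    rw [hJdet] at h
    exact h.symm.trans (map_one _)
  have hdetM : ∀ n : ℕ, (Jc ^ n * K).det = 1 := by
    intro n
    rw [Matrix.det_mul, Matrix.det_pow, hdetJc, hKdet, one_pow, one_mul]
  have htrJc : Jc.trace = (J.trace : ℚ) := by
    rw [Matrix.trace_fin_two, Matrix.trace_fin_two, hJc]
    simp [Matrix.map_apply]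
  have hch : Jc * Jc = (J.trace : ℚ) • Jc - 1 := by
    rw [← htrJc]; exact aux_ch Jc hdetJc
  have hrecQ : ∀ n : ℕ, (Jc ^ (n + 2) * K).trace
      = (J.trace : ℚ) * (Jc ^ (n + 1) * K).trace - (Jc ^ n * K).trace := by
    intro n
    have e1 : Jc ^ (n + 2) = (J.trace : ℚ) • (Jc ^ (n + 1)) - Jc ^ n := by
      rw [pow_add, pow_two, hch, mul_sub, mul_one, Matrix.mul_smul, ← pow_succ]
    rw [e1, Matrix.sub_mul, Matrix.smul_mul, Matrix.trace_sub, Matrix.trace_smul,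
      smul_eq_mul]
  -- common denominator
  set D : ℤ := (((K 0 0).den * (K 0 1).den * (K 1 0).den * (K 1 1).den : ℕ) : ℤ) with hDdef
  have hD : 1 ≤ D := by
    have h1 : 0 < (K 0 0).den * (K 0 1).den * (K 1 0).den * (K 1 1).den :=
      Nat.mul_pos (Nat.mul_pos (Nat.mul_pos (K 0 0).pos (K 0 1).pos) (K 1 0).pos) (K 1 1).pos
    rw [hDdef]
    exact_mod_cast h1
  obtain ⟨m00, hm00⟩ := aux_clear D (K 0 0)
    (by rw [hDdef]; exact_mod_cast Int.natCast_dvd_natCast.mpr ⟨(K 0 1).den * (K 1 0).den * (K 1 1).den, by ring⟩)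
  obtain ⟨m01, hm01⟩ := aux_clear D (K 0 1)
    (by rw [hDdef]; exact_mod_cast Int.natCast_dvd_natCast.mpr ⟨(K 0 0).den * (K 1 0).den * (K 1 1).den, by ring⟩)
  obtain ⟨m10, hm10⟩ := aux_clear D (K 1 0)
    (by rw [hDdef]; exact_mod_cast Int.natCast_dvd_natCast.mpr ⟨(K 0 0).den * (K 0 1).den * (K 1 1).den, by ring⟩)
  obtain ⟨m11, hm11⟩ := aux_clear D (K 1 1)
    (by rw [hDdef]; exact_mod_cast Int.natCast_dvd_natCast.mpr ⟨(K 0 0).den * (K 0 1).den * (K 1 0).den, by ring⟩)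
  set c : ℕ → ℤ := fun n =>
    (J ^ n) 0 0 * m00 + (J ^ n) 0 1 * m10 + (J ^ n) 1 0 * m01 + (J ^ n) 1 1 * m11 with hcdef
  have hc : ∀ n : ℕ, ((c n : ℚ)) = (D : ℚ) * (Jc ^ n * K).trace := by
    intro n
    rw [hmap n, Matrix.trace_fin_two]
    simp only [Matrix.mul_apply, Fin.sum_univ_two, Matrix.map_apply, hcdef]
    push_cast
    rw [← hm00, ← hm01, ← hm10, ← hm11]
    ring
  have hrecZ : ∀ n : ℕ, c (n + 2) = J.trace * c (n + 1) - c n := by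
    intro n
    have h : ((c (n + 2) : ℚ)) = ((J.trace * c (n + 1) - c n : ℤ) : ℚ) := by
      push_cast
      rw [hc (n + 2), hc (n + 1), hc n, hrecQ n]
      ring
    exact_mod_cast h
  have ht3 : 3 ≤ |J.trace| := by
    have := Int.lt_iff_add_one_le.mp hJtr
    linarith
  rcases aux_seq c J.trace ht3 hrecZ (2 * D ^ 2) with hz | ⟨N, hN⟩
  · refine ⟨0, fun n _ => ?_⟩
    rintro ⟨v, q, hv, heq⟩
    have hroot := aux_eig _ (hdetM n) v q hv heq
    have hD0 : (D : ℚ) ≠ 0 := by positivity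
    have htr0 : (Jc ^ n * K).trace = 0 := by
      have h := hc n
      rw [hz n] at h
      push_cast at h
      exact (mul_eq_zero.mp h.symm).resolve_left hD0
    rw [htr0] at hroot
    nlinarith [sq_nonneg q, hroot]
  · refine ⟨N, fun n hn => ?_⟩
    rintro ⟨v, q, hv, heq⟩
    have hroot := aux_eig _ (hdetM n) v q hv heq
    have hD0 : (D : ℚ) ≠ 0 := by positivity
    have htr : (Jc ^ n * K).trace = (c n : ℚ) / (D : ℚ) := by
      rw [hc n]
      field_simp
    rw [htr] at hroot
    have hb := aux_bound D hD (c n) q hroot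
    exact absurd hb (not_le.mpr (hN n hn))
end
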